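/- There exists a constant c > 0 such that for every ζ ∈ H¹(ℝ) ∩ L²(ℝ) with ∫_ℝ ζ(x) w'(x) dx = 0, one has ∫_ℝ |ζ'(x)|² − f'(w(x)) |ζ(x)|² dx ≥ c ∫_ℝ |ζ(x)|² dx. -/

import Mathlib

open MeasureTheory Real Filter Set Topology

noncomputable section

/-- The heteroclinic profile `w(s) = tanh(s/√2)`. -/
def w (s : ℝ) : ℝ := Real.tanh (s / Real.sqrt 2)

/-- The Allen-Cahn nonlinearity `f(u) = (1-u²)u`. -/
def f (u : ℝ) : ℝ := (1 - u ^ 2) * u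

/-- `f'(u) = 1 - 3u²`. -/
def fp (u : ℝ) : ℝ := 1 - 3 * u ^ 2

/-- The interaction constant β. -/
def β : ℝ :=
  6 * (∫ x : ℝ, Real.exp (Real.sqrt 2 * x) * (1 - w x ^ 2) * deriv w x) /
    ∫ x : ℝ, deriv w x ^ 2

/-- The constants `b_l`. -/
def bcoef (k l : ℕ) : ℝ :=
  -(1 / Real.sqrt 2) * Real.log (((k : ℝ) - (l : ℝ)) * (l : ℝ) / (2 * β))

/-- The constants `γ_j`, determined by `γ_{k-j+1} = -γ_j = (1/2)∑_{i=j}^{k-j} b_i` for `j ≤ k/2`. -/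
def γcoef (k j : ℕ) : ℝ :=
  if j ≤ k / 2 then -(1 / 2) * ∑ i ∈ Finset.Icc j (k - j), bcoef k i
  else (1 / 2) * ∑ i ∈ Finset.Icc (k - j + 1) (j - 1), bcoef k i

/-- `ρ_j⁰(t) = √(-2(n-1)t) + (j-(k+1)/2) η(t) + γ_j`. -/
def ρ0 (n k : ℕ) (η : ℝ → ℝ) (j : ℕ) (t : ℝ) : ℝ :=
  Real.sqrt (-2 * ((n : ℝ) - 1) * t) + ((j : ℝ) - ((k : ℝ) + 1) / 2) * η t + γcoef k j

/-- `ρ_j⁰` extended by the convention `ρ₀⁰ = ρ₁⁰ - η`. -/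
def ρ0e (n k : ℕ) (η : ℝ → ℝ) (j : ℕ) (t : ℝ) : ℝ :=
  if j = 0 then ρ0 n k η 1 t - η t else ρ0 n k η j t

/-- `ρ_j = ρ_j⁰ + h_j`. -/
def ρf (n k : ℕ) (η : ℝ → ℝ) (h : ℕ → ℝ → ℝ) (j : ℕ) (t : ℝ) : ℝ :=
  ρ0 n k η j t + h j t

/-- `z(t,r) = ∑_{j=1}^k (-1)^{j+1} w(r - ρ_j(t)) - 1`. -/
def zf (n k : ℕ) (η : ℝ → ℝ) (h : ℕ → ℝ → ℝ) (t r : ℝ) : ℝ :=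
  (∑ j ∈ Finset.Icc 1 k, (-1 : ℝ) ^ (j + 1) * w (r - ρf n k η h j t)) - 1

/-- The error term `E`. -/
def Ef (n k : ℕ) (η : ℝ → ℝ) (h : ℕ → ℝ → ℝ) (t r : ℝ) : ℝ :=
  (∑ j ∈ Finset.Icc 1 k, (-1 : ℝ) ^ (j + 1) *
      (deriv w (r - ρf n k η h j t) * deriv (ρf n k η h j) t +
        ((n : ℝ) - 1) / r * deriv w (r - ρf n k η h j t))) +
    f (zf n k η h t r) -
    ∑ j ∈ Finset.Icc 1 k, (-1 : ℝ) ^ (j + 1) * f (w (r - ρf n k η h j t))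

/-- The nonlinear term `N(ψ) = f(z+ψ) - f(z) - f'(z)ψ`. -/
def Nf (n k : ℕ) (η : ℝ → ℝ) (h : ℕ → ℝ → ℝ) (ψ : ℝ → ℝ → ℝ) (t r : ℝ) : ℝ :=
  f (zf n k η h t r + ψ t r) - f (zf n k η h t r) - fp (zf n k η h t r) * ψ t r

/-- The piecewise description of the weight `Φ`. -/
def PhiSpec (n k : ℕ) (σ : ℝ) (η : ℝ → ℝ) (Φ : ℝ → ℝ → ℝ) : Prop :=
  (∀ t r : ℝ, r ≤ (ρ0e n k η 0 t + ρ0e n k η 1 t) / 2 →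
      Φ t r = Real.exp (σ * (r - ρ0 n k η 1 t))) ∧
    (∀ t r : ℝ, (ρ0e n k η 0 t + ρ0e n k η 1 t) / 2 ≤ r →
      r ≤ (ρ0 n k η 1 t + ρ0 n k η 2 t) / 2 →
      Φ t r = Real.exp (σ * (r - ρ0 n k η 2 t))) ∧
    (∀ j : ℕ, 2 ≤ j → j < k → ∀ t r : ℝ,
      (ρ0 n k η j t + ρ0 n k η (j - 1) t) / 2 ≤ r →
      r ≤ (ρ0 n k η j t + ρ0 n k η (j + 1) t) / 2 →
      Φ t r =
        Real.exp (σ * (ρ0 n k η (j - 1) t - r)) + Real.exp (σ * (r - ρ0 n k η (j + 1) t))) ∧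
    ∀ t r : ℝ, (ρ0 n k η k t + ρ0 n k η (k - 1) t) / 2 ≤ r →
      Φ t r = Real.exp (σ * (ρ0 n k η (k - 1) t - r))

/-- The class of admissible perturbations `h` on `(-∞, τ]`:
`h ∈ C¹` and `sup |h| + sup (|t|/log|t|)|h'| < 1`. -/
def hSpec (k : ℕ) (τ : ℝ) (h h' : ℕ → ℝ → ℝ) : Prop :=
  (∀ j ∈ Finset.Icc 1 k, ∀ t ≤ τ, HasDerivAt (h j) (h' j t) t) ∧
    (∀ j ∈ Finset.Icc 1 k, ContinuousOn (h' j) (Set.Iic τ)) ∧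
    ∃ a b : ℝ, a + b < 1 ∧
      (∀ t ≤ τ, Real.sqrt (∑ j ∈ Finset.Icc 1 k, h j t ^ 2) ≤ a) ∧
      ∀ t ≤ τ, |t| / Real.log |t| * Real.sqrt (∑ j ∈ Finset.Icc 1 k, h' j t ^ 2) ≤ b

/-- The weighted sup norm `‖u‖_{C_Φ(S)} = ‖u/Φ‖_{L^∞(S)}`. -/
def cnorm (Φ u : ℝ → ℝ → ℝ) (S : Set (ℝ × ℝ)) : ℝ :=
  sSup ((fun p : ℝ × ℝ => |u p.1 p.2| / Φ p.1 p.2) '' S)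

/-- Membership in the space `C_Φ(S)`: continuity and finiteness of the norm. -/
def memC (Φ u : ℝ → ℝ → ℝ) (S : Set (ℝ × ℝ)) : Prop :=
  ContinuousOn (fun p : ℝ × ℝ => u p.1 p.2) S ∧
    BddAbove ((fun p : ℝ × ℝ => |u p.1 p.2| / Φ p.1 p.2) '' S)

/-- The parabolic region `(s,t) × (0,∞)`. -/
def QS (s t : ℝ) : Set (ℝ × ℝ) := Set.Ioo s t ×ˢ Set.Ioi 0

/-- The parabolic region `(-∞,t) × (0,∞)`. -/
def QI (t : ℝ) : Set (ℝ × ℝ) := Set.Iio t ×ˢ Set.Ioi 0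

/-- The norm of the space Λ. -/
def lamNorm (k : ℕ) (T₀ : ℝ) (h h' : ℕ → ℝ → ℝ) : ℝ :=
  sSup ((fun t => Real.sqrt (∑ j ∈ Finset.Icc 1 k, h j t ^ 2)) '' Set.Iic (-T₀)) +
    sSup ((fun t => |t| / Real.log |t| * Real.sqrt (∑ j ∈ Finset.Icc 1 k, h' j t ^ 2)) ''
      Set.Iic (-T₀))

/-- Membership in the set Λ. -/
def lamMem (k : ℕ) (T₀ : ℝ) (h h' : ℕ → ℝ → ℝ) : Prop :=
  (∀ j ∈ Finset.Icc 1 k, ∀ t ≤ -T₀, HasDerivAt (h j) (h' j t) t) ∧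
    (∀ j ∈ Finset.Icc 1 k, ContinuousOn (h' j) (Set.Iic (-T₀))) ∧
    BddAbove ((fun t => Real.sqrt (∑ j ∈ Finset.Icc 1 k, h j t ^ 2)) '' Set.Iic (-T₀)) ∧
    BddAbove ((fun t => |t| / Real.log |t| * Real.sqrt (∑ j ∈ Finset.Icc 1 k, h' j t ^ 2)) ''
      Set.Iic (-T₀)) ∧
    lamNorm k T₀ h h' < 1

/-- The ODE `η' + η/(2t) + e^{-√2 η} = 0` on `(-∞,-1]`, `η(-1) = 0`. -/
def etaODE (η : ℝ → ℝ) : Prop :=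
  η (-1) = 0 ∧
    ∀ t ≤ (-1 : ℝ), HasDerivAt η (-(η t / (2 * t)) - Real.exp (-(Real.sqrt 2) * η t)) t

/-- Partial derivative in time. -/
def dT (ψ : ℝ → ℝ → ℝ) (t r : ℝ) : ℝ := deriv (fun τ => ψ τ r) t

/-- Partial derivative in the radial variable. -/
def dR (ψ : ℝ → ℝ → ℝ) (t r : ℝ) : ℝ := deriv (ψ t) r

/-- Second partial derivative in the radial variable. -/
def dRR (ψ : ℝ → ℝ → ℝ) (t r : ℝ) : ℝ := deriv (deriv (ψ t)) r

lemma hasDerivAt_tanh' (s : ℝ) : HasDerivAt Real.tanh (1 - Real.tanh s ^ 2) s := by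
  have h := (Real.hasDerivAt_sinh s).div (Real.hasDerivAt_cosh s) (Real.cosh_pos s).ne'
  have e : Real.tanh = fun x => Real.sinh x / Real.cosh x := by
    funext x; exact Real.tanh_eq_sinh_div_cosh x
  rw [e]
  refine h.congr_deriv ?_
  simp only [Real.tanh_eq_sinh_div_cosh]
  have hc := (Real.cosh_pos s).ne'
  field_simp

lemma hw (x : ℝ) : HasDerivAt w ((1 - w x ^ 2) / Real.sqrt 2) x := by
  have := (hasDerivAt_tanh' (x / Real.sqrt 2)).comp x ((hasDerivAt_id x).div_const (Real.sqrt 2))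
  unfold w
  simpa [w, div_eq_mul_inv, mul_comm, Function.comp_def] using this

lemma deriv_w (x : ℝ) : deriv w x = (1 - w x ^ 2) / Real.sqrt 2 := (hw x).deriv

lemma w_sq_lt_one (x : ℝ) : w x ^ 2 < 1 := by
  have h1 := Real.sinh_lt_cosh (x / Real.sqrt 2)
  have h2 := Real.sinh_lt_cosh (-(x / Real.sqrt 2))
  rw [Real.sinh_neg, Real.cosh_neg] at h2
  have hc := Real.cosh_pos (x / Real.sqrt 2)
  simp only [w, Real.tanh_eq_sinh_div_cosh, div_pow]
  rw [div_lt_one (by positivity)]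
  nlinarith

lemma w_abs_le (x : ℝ) : |w x| ≤ 1 := by
  nlinarith [w_sq_lt_one x, sq_abs (w x), abs_nonneg (w x)]

lemma phi_pos (x : ℝ) : 0 < 1 - w x ^ 2 := by linarith [w_sq_lt_one x]
lemma phi_le_one (x : ℝ) : 1 - w x ^ 2 ≤ 1 := by nlinarith [sq_nonneg (w x)]

-- sech² bounds
lemma phi_eq (x : ℝ) : 1 - w x ^ 2 = 1 / Real.cosh (x / Real.sqrt 2) ^ 2 := by
  have hc := (Real.cosh_pos (x / Real.sqrt 2)).ne'
  simp only [w, Real.tanh_eq_sinh_div_cosh, div_pow]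
  field_simp
  exact Real.cosh_sq_sub_sinh_sq _

lemma cosh_ge (s : ℝ) : Real.exp |s| / 2 ≤ Real.cosh s := by
  rw [Real.cosh_eq]
  rcases abs_cases s with ⟨h, _⟩ | ⟨h, _⟩ <;> rw [h] <;> nlinarith [Real.exp_pos s, Real.exp_pos (-s)]

lemma cosh_le' (s : ℝ) : Real.cosh s ≤ Real.exp |s| := by
  rw [Real.cosh_eq]
  rcases abs_cases s with ⟨h, h2⟩ | ⟨h, h2⟩ <;> rw [h]
  · nlinarith [Real.exp_le_exp.2 (show -s ≤ s from by linarith)]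
  · nlinarith [Real.exp_le_exp.2 (show s ≤ -s from by linarith)]

lemma abs_div_sqrt_two (x : ℝ) : Real.sqrt 2 * |x / Real.sqrt 2| = |x| := by
  rw [abs_div, abs_of_pos (by positivity : (0:ℝ) < Real.sqrt 2)]
  field_simp

lemma he_aux (x : ℝ) : Real.exp (-(Real.sqrt 2 * |x|)) = ((Real.exp |x / Real.sqrt 2|) ^ 2)⁻¹ := by
  have h2 : Real.exp |x / Real.sqrt 2| ^ 2 = Real.exp (|x / Real.sqrt 2| + |x / Real.sqrt 2|) := by
    rw [sq, ← Real.exp_add]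
  rw [h2, ← Real.exp_neg]
  congr 1
  have h := abs_div_sqrt_two x
  have hs : Real.sqrt 2 * Real.sqrt 2 = 2 := Real.mul_self_sqrt (by norm_num)
  have h3 : Real.sqrt 2 * |x| = |x / Real.sqrt 2| + |x / Real.sqrt 2| := by
    rw [← h, ← mul_assoc, hs]; ring
  linarith

lemma phi_le (x : ℝ) : 1 - w x ^ 2 ≤ 4 * Real.exp (-(Real.sqrt 2 * |x|)) := by
  rw [phi_eq, he_aux]
  have h1 := cosh_ge (x / Real.sqrt 2)
  have hc := Real.cosh_pos (x / Real.sqrt 2)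
  have he := Real.exp_pos |x / Real.sqrt 2|
  rw [show (4:ℝ) * ((Real.exp |x / Real.sqrt 2|) ^ 2)⁻¹ = 4 / (Real.exp |x / Real.sqrt 2|) ^ 2 by ring,
    div_le_div_iff₀ (by positivity) (by positivity)]
  nlinarith

lemma phi_ge (x : ℝ) : Real.exp (-(Real.sqrt 2 * |x|)) ≤ 1 - w x ^ 2 := by
  rw [phi_eq, he_aux]
  have h1 := cosh_le' (x / Real.sqrt 2)
  have hc := Real.cosh_pos (x / Real.sqrt 2)
  have he := Real.exp_pos |x / Real.sqrt 2|
  rw [show ((Real.exp |x / Real.sqrt 2|) ^ 2)⁻¹ = 1 / (Real.exp |x / Real.sqrt 2|) ^ 2 by ring,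
    div_le_div_iff₀ (by positivity) (by positivity)]
  nlinarith

lemma integrable_mul_of_sq {μ : Measure ℝ} {f g : ℝ → ℝ} (hf : AEStronglyMeasurable f μ)
    (hg : AEStronglyMeasurable g μ) (hf2 : Integrable (fun x => f x ^ 2) μ)
    (hg2 : Integrable (fun x => g x ^ 2) μ) : Integrable (fun x => f x * g x) μ := by
  refine ((hf2.add hg2).div_const 2).mono' (hf.mul hg) (ae_of_all _ fun x => ?_)
  simp only [norm_mul, Real.norm_eq_abs, Pi.add_apply]
  nlinarith [sq_nonneg (|f x| - |g x|), sq_abs (f x), sq_abs (g x), abs_nonneg (f x), abs_nonneg (g x)]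

lemma integral_CS {μ : Measure ℝ} (f g : ℝ → ℝ) (hf : AEStronglyMeasurable f μ)
    (hg : AEStronglyMeasurable g μ) (hf2 : Integrable (fun x => f x ^ 2) μ)
    (hg2 : Integrable (fun x => g x ^ 2) μ) :
    (∫ x, f x * g x ∂μ) ^ 2 ≤ (∫ x, f x ^ 2 ∂μ) * ∫ x, g x ^ 2 ∂μ := by
  have hfg : Integrable (fun x => f x * g x) μ := integrable_mul_of_sq hf hg hf2 hg2
  have key : ∀ t : ℝ, 0 ≤ (∫ x, f x ^ 2 ∂μ) * (t * t) + (2 * ∫ x, f x * g x ∂μ) * t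
      + ∫ x, g x ^ 2 ∂μ := by
    intro t
    have h1 : Integrable (fun x => t ^ 2 * f x ^ 2) μ := hf2.const_mul _
    have h2 : Integrable (fun x => 2 * t * (f x * g x)) μ := hfg.const_mul _
    have e : ∫ x, (t * f x + g x) ^ 2 ∂μ
        = (∫ x, f x ^ 2 ∂μ) * (t * t) + (2 * ∫ x, f x * g x ∂μ) * t + ∫ x, g x ^ 2 ∂μ := by
      have h12 : Integrable (fun x => t ^ 2 * f x ^ 2 + 2 * t * (f x * g x)) μ := h1.add h2
      have : (fun x => (t * f x + g x) ^ 2)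
          = fun x => t ^ 2 * f x ^ 2 + 2 * t * (f x * g x) + g x ^ 2 := by
        funext x; ring
      rw [this, integral_add h12 hg2, integral_add h1 h2,
        integral_const_mul, integral_const_mul]
      ring
    rw [← e]
    exact integral_nonneg fun x => sq_nonneg _
  have hd := discrim_le_zero key
  rw [discrim] at hd
  nlinarith [hd]

lemma integral_deriv_eq_zero (F F' : ℝ → ℝ) (hd : ∀ x, HasDerivAt F (F' x) x)
    (hi : Integrable F') (ht : Tendsto F atTop (𝓝 0)) (hb : Tendsto F atBot (𝓝 0)) :
    ∫ x, F' x = 0 := by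
  have h1 : ∫ x in Iic 0, F' x = F 0 - 0 :=
    integral_Iic_of_hasDerivAt_of_tendsto' (fun x _ => hd x) hi.integrableOn hb
  have h2 : ∫ x in Ioi 0, F' x = 0 - F 0 :=
    integral_Ioi_of_hasDerivAt_of_tendsto' (fun x _ => hd x) hi.integrableOn ht
  rw [← intervalIntegral.integral_Iic_add_Ioi (b := 0) hi.integrableOn hi.integrableOn, h1, h2]
  ring

lemma limit_zero_of_integrable_atTop (g : ℝ → ℝ) (hi : Integrable g) (hnn : ∀ x, 0 ≤ g x)
    {L : ℝ} (ht : Tendsto g atTop (𝓝 L)) : L = 0 := by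
  by_contra hL
  have hL0 : 0 ≤ L := le_of_tendsto_of_tendsto' tendsto_const_nhds ht fun x => hnn x
  have hLpos : 0 < L := lt_of_le_of_ne hL0 (Ne.symm hL)
  obtain ⟨M, hM⟩ := (ht.eventually_const_le (show L / 2 < L by linarith)).exists_forall_of_atTop
  have hc : IntegrableOn (fun _ : ℝ => L / 2) (Ioi M) volume := by
    refine (hi.integrableOn).mono' aestronglyMeasurable_const ?_
    filter_upwards [ae_restrict_mem measurableSet_Ioi] with x hx
    rw [Real.norm_eq_abs, abs_of_pos (by linarith)]
    exact hM x (le_of_lt hx)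
  rw [integrableOn_const_iff] at hc
  rcases hc with h | h
  · simp at h; linarith
  · rw [Real.volume_Ioi] at h; exact absurd h (by simp)

lemma limit_zero_of_integrable_atBot (g : ℝ → ℝ) (hi : Integrable g) (hnn : ∀ x, 0 ≤ g x)
    {L : ℝ} (ht : Tendsto g atBot (𝓝 L)) : L = 0 := by
  by_contra hL
  have hL0 : 0 ≤ L := le_of_tendsto_of_tendsto' tendsto_const_nhds ht fun x => hnn x
  have hLpos : 0 < L := lt_of_le_of_ne hL0 (Ne.symm hL)
  obtain ⟨M, hM⟩ := (ht.eventually_const_le (show L / 2 < L by linarith)).exists_forall_of_atBot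
  have hc : IntegrableOn (fun _ : ℝ => L / 2) (Iic M) volume := by
    refine (hi.integrableOn).mono' aestronglyMeasurable_const ?_
    filter_upwards [ae_restrict_mem measurableSet_Iic] with x hx
    rw [Real.norm_eq_abs, abs_of_pos (by linarith)]
    exact hM x hx
  rw [integrableOn_const_iff] at hc
  rcases hc with h | h
  · simp at h; linarith
  · rw [Real.volume_Iic] at h; exact absurd h (by simp)

lemma tendsto_of_sq {l : Filter ℝ} {ζ : ℝ → ℝ} (h : Tendsto (fun x => ζ x ^ 2) l (𝓝 0)) :
    Tendsto ζ l (𝓝 0) := by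
  rw [tendsto_zero_iff_abs_tendsto_zero]
  have h2 : Tendsto (fun x => Real.sqrt (ζ x ^ 2)) l (𝓝 (Real.sqrt 0)) :=
    (Real.continuous_sqrt.tendsto 0).comp h
  simpa [Real.sqrt_sq_eq_abs, Function.comp_def] using h2

lemma integral_Iic_eq (g : ℝ → ℝ) (hi : Integrable g) (x : ℝ) :
    ∫ t in Iic x, g t = (∫ t in Iic (0:ℝ), g t) + ∫ t in (0:ℝ)..x, g t := by
  have h := intervalIntegral.integral_Iic_sub_Iic (a := (0:ℝ)) (b := x) (μ := volume)
    hi.integrableOn hi.integrableOn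
  linarith

lemma tendsto_integral_Iic_atBot (g : ℝ → ℝ) (hi : Integrable g) :
    Tendsto (fun x => ∫ t in Iic x, g t) atBot (𝓝 0) := by
  have h := intervalIntegral_tendsto_integral_Iic (0:ℝ) hi.integrableOn (tendsto_id (α := ℝ))
  have e : (fun x : ℝ => ∫ t in Iic x, g t)
      = fun x => (∫ t in Iic (0:ℝ), g t) - ∫ t in x..(0:ℝ), g t := by
    funext x
    rw [integral_Iic_eq g hi x, intervalIntegral.integral_symm]
    ring
  rw [e]
  have := (tendsto_const_nhds (x := ∫ t in Iic (0:ℝ), g t)).sub h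
  simpa using this

lemma tendsto_integral_Iic_atTop (g : ℝ → ℝ) (hi : Integrable g) :
    Tendsto (fun x => ∫ t in Iic x, g t) atTop (𝓝 (∫ t, g t)) := by
  have h := intervalIntegral_tendsto_integral_Ioi (0:ℝ) hi.integrableOn (tendsto_id (α := ℝ))
  have e : (fun x : ℝ => ∫ t in Iic x, g t)
      = fun x => (∫ t in Iic (0:ℝ), g t) + ∫ t in (0:ℝ)..x, g t := by
    funext x; exact integral_Iic_eq g hi x
  rw [e, ← intervalIntegral.integral_Iic_add_Ioi (b := (0:ℝ)) hi.integrableOn hi.integrableOn]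
  exact tendsto_const_nhds.add h

lemma hasDerivAt_integral_Iic (g : ℝ → ℝ) (hi : Integrable g) (hc : Continuous g) (x : ℝ) :
    HasDerivAt (fun y => ∫ t in Iic y, g t) (g x) x := by
  have e : (fun y : ℝ => ∫ t in Iic y, g t)
      = fun y => (∫ t in Iic (0:ℝ), g t) + ∫ t in (0:ℝ)..y, g t := by
    funext y; exact integral_Iic_eq g hi y
  rw [e]
  exact (intervalIntegral.integral_hasDerivAt_right hi.intervalIntegrable
    (hc.stronglyMeasurableAtFilter _ _) hc.continuousAt).const_add _

lemma exp_mul_hasDerivAt (c t : ℝ) :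
    HasDerivAt (fun s => Real.exp (c * s)) (c * Real.exp (c * t)) t := by
  have := (Real.hasDerivAt_exp (c * t)).comp t ((hasDerivAt_id t).const_mul c)
  simpa [mul_comm, Function.comp_def] using this

lemma exp_mul_div_hasDerivAt (c t : ℝ) (hc : c ≠ 0) :
    HasDerivAt (fun s => Real.exp (c * s) / c) (Real.exp (c * t)) t := by
  have h := (exp_mul_hasDerivAt c t).div_const c
  refine h.congr_deriv ?_
  field_simp

lemma cont_exp_mul (c : ℝ) : Continuous fun s => Real.exp (c * s) :=
  Real.continuous_exp.comp (continuous_const.mul continuous_id)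

lemma intervalIntegral_exp_mul (c a b : ℝ) (hc : c ≠ 0) :
    ∫ t in a..b, Real.exp (c * t) = Real.exp (c * b) / c - Real.exp (c * a) / c :=
  intervalIntegral.integral_eq_sub_of_hasDerivAt
    (fun t _ => exp_mul_div_hasDerivAt c t hc) ((cont_exp_mul c).intervalIntegrable a b)

lemma integrableOn_exp_mul_Iic' (c x : ℝ) (hc : 0 < c) :
    IntegrableOn (fun t => Real.exp (c * t)) (Iic x) := by
  refine integrableOn_Iic_of_intervalIntegral_norm_bounded (Real.exp (c * x) / c) x
    (fun y : ℝ => ((cont_exp_mul c).integrableOn_Ioc)) (tendsto_id (α := ℝ)) ?_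
  filter_upwards with y
  have h := intervalIntegral_exp_mul c y x hc.ne'
  simp only [Real.norm_eq_abs, abs_of_pos (Real.exp_pos _), id_eq]
  rw [h]
  have := Real.exp_pos (c * y)
  have := (div_pos (Real.exp_pos (c * y)) hc)
  linarith

lemma integral_exp_mul_Iic' (c x : ℝ) (hc : 0 < c) :
    ∫ t in Iic x, Real.exp (c * t) = Real.exp (c * x) / c := by
  have ht : Tendsto (fun s => Real.exp (c * s) / c) atBot (𝓝 0) := by
    have h1 : Tendsto (fun s : ℝ => c * s) atBot atBot := tendsto_id.const_mul_atBot hc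
    have := (Real.tendsto_exp_atBot.comp h1).div_const c
    simpa using this
  have := integral_Iic_of_hasDerivAt_of_tendsto' (a := x)
    (fun t _ => exp_mul_div_hasDerivAt c t hc.ne') (integrableOn_exp_mul_Iic' c x hc) ht
  simpa using this

lemma integrableOn_exp_neg_mul_Ioi (c x : ℝ) (hc : 0 < c) :
    IntegrableOn (fun t => Real.exp (-(c * t))) (Ioi x) := by
  refine integrableOn_Ioi_of_intervalIntegral_norm_bounded (Real.exp (-(c * x)) / c) x
    (fun y : ℝ => (Real.continuous_exp.comp (continuous_const.mul continuous_id).neg).integrableOn_Ioc)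
    (tendsto_id (α := ℝ)) ?_
  filter_upwards with y
  have h := intervalIntegral_exp_mul (-c) x y (by linarith)
  simp only [Real.norm_eq_abs, abs_of_pos (Real.exp_pos _)]
  have e : ∀ t : ℝ, Real.exp (-(c * t)) = Real.exp (-c * t) := by intro t; ring_nf
  simp only [e, id_eq]
  rw [h]
  have h1 := Real.exp_pos (-c * y)
  have h2 := Real.exp_pos (-c * x)
  have hcne : c ≠ 0 := hc.ne'
  have h3 : Real.exp (-c * y) / (-c) - Real.exp (-c * x) / (-c)
      = (Real.exp (-c * x) - Real.exp (-c * y)) / c := by ring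
  rw [h3]
  gcongr
  linarith

lemma integral_exp_neg_mul_Ioi (c x : ℝ) (hc : 0 < c) :
    ∫ t in Ioi x, Real.exp (-(c * t)) = Real.exp (-(c * x)) / c := by
  have hd : ∀ t : ℝ, HasDerivAt (fun s => -(Real.exp (-(c * s)) / c)) (Real.exp (-(c * t))) t := by
    intro t
    have h0 := exp_mul_div_hasDerivAt (-c) t (by linarith)
    have hcne : c ≠ 0 := hc.ne'
    have e : (fun s => -(Real.exp (-(c * s)) / c)) = fun s => Real.exp (-c * s) / (-c) := by
      have hcc : ∀ z : ℝ, c * z * c⁻¹ = z := fun z => by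
        rw [mul_comm c z, mul_assoc, mul_inv_cancel₀ hcne, mul_one]
      funext s; rw [neg_mul]; field_simp
    rw [e]
    convert h0 using 1
    rw [neg_mul]
  have ht : Tendsto (fun s => -(Real.exp (-(c * s)) / c)) atTop (𝓝 0) := by
    have h1 : Tendsto (fun s : ℝ => -(c * s)) atTop atBot := by
      have := (tendsto_id (α := ℝ)).const_mul_atTop hc
      exact tendsto_neg_atBot_iff.mpr this
    have := ((Real.tendsto_exp_atBot.comp h1).div_const c).neg
    simpa using this
  have := integral_Ioi_of_hasDerivAt_of_tendsto' (a := x)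
    (fun t _ => hd t) (integrableOn_exp_neg_mul_Ioi c x hc) ht
  rw [this]
  ring

lemma integrable_exp_neg_abs (c : ℝ) (hc : 0 < c) :
    Integrable (fun t : ℝ => Real.exp (-(c * |t|))) := by
  rw [← integrableOn_univ, ← Iic_union_Ioi (a := (0:ℝ))]
  refine IntegrableOn.union ?_ ?_
  · refine ((integrableOn_exp_mul_Iic' c 0 hc).congr_fun (fun t ht => ?_) measurableSet_Iic)
    rw [abs_of_nonpos (mem_Iic.1 ht)]
    ring_nf
  · refine ((integrableOn_exp_neg_mul_Ioi c 0 hc).congr_fun (fun t ht => ?_) measurableSet_Ioi)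
    rw [abs_of_pos (mem_Ioi.1 ht)]

-- √2 facts
lemma s2 : Real.sqrt 2 * Real.sqrt 2 = 2 := Real.mul_self_sqrt (by norm_num)
lemma s2pos : 0 < Real.sqrt 2 := by positivity
lemma s2ne : Real.sqrt 2 ≠ 0 := s2pos.ne'
lemma s2ge : (1.4 : ℝ) ≤ Real.sqrt 2 := by nlinarith [s2, Real.sqrt_nonneg 2]
lemma s2le : Real.sqrt 2 ≤ (1.5 : ℝ) := by nlinarith [s2, Real.sqrt_nonneg 2]


lemma w_diff : Differentiable ℝ w := fun x => (hw x).differentiableAt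
lemma w_cont : Continuous w := w_diff.continuous

lemma phi_cont : Continuous fun x => 1 - w x ^ 2 :=
  continuous_const.sub (w_cont.pow 2)

-- integrability of the weight
lemma phi_integrable : Integrable fun x => 1 - w x ^ 2 := by
  refine ((integrable_exp_neg_abs (Real.sqrt 2) s2pos).const_mul 4).mono'
    phi_cont.aestronglyMeasurable (ae_of_all _ fun x => ?_)
  rw [Real.norm_eq_abs, abs_of_pos (phi_pos x)]
  exact phi_le x

lemma phi_sq_integrable : Integrable fun x => (1 - w x ^ 2) ^ 2 := by
  refine phi_integrable.mono' (phi_cont.pow 2).aestronglyMeasurable (ae_of_all _ fun x => ?_)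
  rw [Real.norm_eq_abs, abs_of_pos (pow_pos (phi_pos x) 2)]
  nlinarith [phi_pos x, phi_le_one x]

lemma four_div_s2_le (E : ℝ) (hE : 0 < E) : 4 * (E / Real.sqrt 2) ≤ 3 * E := by
  rw [mul_div_assoc', div_le_iff₀ s2pos]; nlinarith [s2ge]
lemma sixteen_div_s2_le (E : ℝ) (hE : 0 < E) : 16 * (E / (2 * Real.sqrt 2)) ≤ 6 * E := by
  rw [mul_div_assoc', div_le_iff₀ (by positivity : (0:ℝ) < 2 * Real.sqrt 2)]; nlinarith [s2ge]

-- bound for set integrals of the weight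
lemma phi_setint_Iic (x : ℝ) : ∫ t in Iic x, (1 - w t ^ 2) ≤ 3 * Real.exp (Real.sqrt 2 * x) := by
  have h1 : ∫ t in Iic x, (1 - w t ^ 2) ≤ ∫ t in Iic x, 4 * Real.exp (Real.sqrt 2 * t) := by
    refine setIntegral_mono_on phi_integrable.integrableOn
      (((integrableOn_exp_mul_Iic' (Real.sqrt 2) x s2pos).const_mul 4)) measurableSet_Iic
      fun t _ => ?_
    refine (phi_le t).trans ?_
    have : -(Real.sqrt 2 * |t|) ≤ Real.sqrt 2 * t := by
      rcases abs_cases t with ⟨h, _⟩ | ⟨h, _⟩ <;> nlinarith [s2pos]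
    nlinarith [Real.exp_le_exp.2 this]
  rw [integral_const_mul, integral_exp_mul_Iic' _ _ s2pos] at h1
  exact h1.trans (four_div_s2_le _ (Real.exp_pos _))

lemma phi_setint_Ioi (x : ℝ) : ∫ t in Ioi x, (1 - w t ^ 2) ≤ 3 * Real.exp (-(Real.sqrt 2 * x)) := by
  have h1 : ∫ t in Ioi x, (1 - w t ^ 2) ≤ ∫ t in Ioi x, 4 * Real.exp (-(Real.sqrt 2 * t)) := by
    refine setIntegral_mono_on phi_integrable.integrableOn
      (((integrableOn_exp_neg_mul_Ioi (Real.sqrt 2) x s2pos).const_mul 4)) measurableSet_Ioi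
      fun t _ => ?_
    refine (phi_le t).trans ?_
    have : -(Real.sqrt 2 * |t|) ≤ -(Real.sqrt 2 * t) := by
      rcases abs_cases t with ⟨h, _⟩ | ⟨h, _⟩ <;> nlinarith [s2pos]
    nlinarith [Real.exp_le_exp.2 this]
  rw [integral_const_mul, integral_exp_neg_mul_Ioi _ _ s2pos] at h1
  exact h1.trans (four_div_s2_le _ (Real.exp_pos _))

-- sharper: φ² with double exponent
lemma phisq_setint_Iic (x : ℝ) :
    ∫ t in Iic x, (1 - w t ^ 2) ^ 2 ≤ 6 * Real.exp (2 * Real.sqrt 2 * x) := by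
  have h1 : ∫ t in Iic x, (1 - w t ^ 2) ^ 2
      ≤ ∫ t in Iic x, 16 * Real.exp (2 * Real.sqrt 2 * t) := by
    refine setIntegral_mono_on phi_sq_integrable.integrableOn
      (((integrableOn_exp_mul_Iic' (2 * Real.sqrt 2) x (by positivity)).const_mul 16)) measurableSet_Iic
      fun t _ => ?_
    have hb := phi_le t
    have hpos := phi_pos t
    have h2 : (1 - w t ^ 2) ^ 2 ≤ 16 * Real.exp (-(Real.sqrt 2 * |t|)) ^ 2 := by nlinarith [Real.exp_pos (-(Real.sqrt 2 * |t|))]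
    refine h2.trans ?_
    have he : Real.exp (-(Real.sqrt 2 * |t|)) ^ 2 = Real.exp (-(2 * Real.sqrt 2 * |t|)) := by
      rw [sq, ← Real.exp_add]; ring_nf
    rw [he]
    have : -(2 * Real.sqrt 2 * |t|) ≤ 2 * Real.sqrt 2 * t := by
      rcases abs_cases t with ⟨h, _⟩ | ⟨h, _⟩ <;> nlinarith [s2pos]
    nlinarith [Real.exp_le_exp.2 this]
  rw [integral_const_mul, integral_exp_mul_Iic' _ _ (by positivity : (0:ℝ) < 2 * Real.sqrt 2)] at h1
  exact h1.trans (sixteen_div_s2_le _ (Real.exp_pos _))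

lemma phisq_setint_Ioi (x : ℝ) :
    ∫ t in Ioi x, (1 - w t ^ 2) ^ 2 ≤ 6 * Real.exp (-(2 * Real.sqrt 2 * x)) := by
  have h1 : ∫ t in Ioi x, (1 - w t ^ 2) ^ 2
      ≤ ∫ t in Ioi x, 16 * Real.exp (-(2 * Real.sqrt 2 * t)) := by
    refine setIntegral_mono_on phi_sq_integrable.integrableOn
      (((integrableOn_exp_neg_mul_Ioi (2 * Real.sqrt 2) x (by positivity)).const_mul 16)) measurableSet_Ioi
      fun t _ => ?_
    have hb := phi_le t
    have hpos := phi_pos t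
    have h2 : (1 - w t ^ 2) ^ 2 ≤ 16 * Real.exp (-(Real.sqrt 2 * |t|)) ^ 2 := by nlinarith [Real.exp_pos (-(Real.sqrt 2 * |t|))]
    refine h2.trans ?_
    have he : Real.exp (-(Real.sqrt 2 * |t|)) ^ 2 = Real.exp (-(2 * Real.sqrt 2 * |t|)) := by
      rw [sq, ← Real.exp_add]; ring_nf
    rw [he]
    have : -(2 * Real.sqrt 2 * |t|) ≤ -(2 * Real.sqrt 2 * t) := by
      rcases abs_cases t with ⟨h, _⟩ | ⟨h, _⟩ <;> nlinarith [s2pos]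
    nlinarith [Real.exp_le_exp.2 this]
  rw [integral_const_mul, integral_exp_neg_mul_Ioi _ _ (by positivity : (0:ℝ) < 2 * Real.sqrt 2)] at h1
  exact h1.trans (sixteen_div_s2_le _ (Real.exp_pos _))

lemma tendsto_integral_Ioi_atTop (g : ℝ → ℝ) (hi : Integrable g) :
    Tendsto (fun x => ∫ t in Ioi x, g t) atTop (𝓝 0) := by
  have e : (fun x => ∫ t in Ioi x, g t) = fun x => (∫ t, g t) - ∫ t in Iic x, g t := by
    funext x
    have := intervalIntegral.integral_Iic_add_Ioi (b := x) hi.integrableOn hi.integrableOn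
    linarith
  rw [e]
  have := tendsto_const_nhds (x := ∫ t, g t) (f := atTop (α := ℝ)) |>.sub
    (tendsto_integral_Iic_atTop g hi)
  simpa using this

lemma tendsto_integral_Ioi_atBot (g : ℝ → ℝ) (hi : Integrable g) :
    Tendsto (fun x => ∫ t in Ioi x, g t) atBot (𝓝 (∫ t, g t)) := by
  have e : (fun x => ∫ t in Ioi x, g t) = fun x => (∫ t, g t) - ∫ t in Iic x, g t := by
    funext x
    have := intervalIntegral.integral_Iic_add_Ioi (b := x) hi.integrableOn hi.integrableOn
    linarith
  rw [e]
  have := tendsto_const_nhds (x := ∫ t, g t) (f := atBot (α := ℝ)) |>.sub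
    (tendsto_integral_Iic_atBot g hi)
  simpa using this

lemma F_CS2 (s : Set ℝ) (ζ : ℝ → ℝ) (hζm : AEStronglyMeasurable ζ volume)
    (Iζ2 : Integrable fun x => ζ x ^ 2) :
    (∫ t in s, (1 - w t ^ 2) * ζ t) ^ 2
      ≤ (∫ t in s, (1 - w t ^ 2) ^ 2) * ∫ t in s, ζ t ^ 2 :=
  integral_CS (μ := volume.restrict s) (fun t => 1 - w t ^ 2) ζ
    phi_cont.aestronglyMeasurable.restrict hζm.restrict
    phi_sq_integrable.integrableOn Iζ2.integrableOn

lemma F_CS1 (s : Set ℝ) (ζ : ℝ → ℝ) (hζm : AEStronglyMeasurable ζ volume)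
    (Iq2 : Integrable fun x => (1 - w x ^ 2) * ζ x ^ 2) :
    (∫ t in s, (1 - w t ^ 2) * ζ t) ^ 2
      ≤ (∫ t in s, (1 - w t ^ 2)) * ∫ t in s, (1 - w t ^ 2) * ζ t ^ 2 := by
  have hsm : Continuous fun t => Real.sqrt (1 - w t ^ 2) := phi_cont.sqrt
  have ef : (fun t => Real.sqrt (1 - w t ^ 2) ^ 2) = fun t => 1 - w t ^ 2 :=
    funext fun t => Real.sq_sqrt (phi_pos t).le
  have eg : (fun t => (Real.sqrt (1 - w t ^ 2) * ζ t) ^ 2)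
      = fun t => (1 - w t ^ 2) * ζ t ^ 2 :=
    funext fun t => by rw [mul_pow, Real.sq_sqrt (phi_pos t).le]
  have efg : ∀ t, Real.sqrt (1 - w t ^ 2) * (Real.sqrt (1 - w t ^ 2) * ζ t)
      = (1 - w t ^ 2) * ζ t :=
    fun t => by rw [← mul_assoc, Real.mul_self_sqrt (phi_pos t).le]
  have h := integral_CS (μ := volume.restrict s) (fun t => Real.sqrt (1 - w t ^ 2))
    (fun t => Real.sqrt (1 - w t ^ 2) * ζ t)
    hsm.aestronglyMeasurable.restrict (hsm.aestronglyMeasurable.mul hζm).restrict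
    (ef ▸ phi_integrable.integrableOn) (eg ▸ Iq2.integrableOn)
  have e1 : ∫ t in s, Real.sqrt (1 - w t ^ 2) * (Real.sqrt (1 - w t ^ 2) * ζ t)
      = ∫ t in s, (1 - w t ^ 2) * ζ t := integral_congr_ae (ae_of_all _ fun t => efg t)
  have e2 : ∫ t in s, Real.sqrt (1 - w t ^ 2) ^ 2 = ∫ t in s, (1 - w t ^ 2) :=
    integral_congr_ae (ae_of_all _ fun t => by simp [Real.sq_sqrt (phi_pos t).le])
  have e3 : ∫ t in s, (Real.sqrt (1 - w t ^ 2) * ζ t) ^ 2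
      = ∫ t in s, (1 - w t ^ 2) * ζ t ^ 2 :=
    integral_congr_ae (ae_of_all _ fun t => by simp [mul_pow, Real.sq_sqrt (phi_pos t).le])
  rw [e1, e2, e3] at h
  exact h

lemma alg1 (a W Z D : ℝ) (h : a * a = 2) (ha : a ≠ 0) :
    (D + a * W * Z) ^ 2 - (D ^ 2 - (1 - 3 * W ^ 2) * Z ^ 2)
      = a * ((1 - W ^ 2) / a) * Z ^ 2 + a * W * (2 * (Z * D)) := by
  field_simp
  linear_combination (W ^ 2 * Z ^ 2) * h

lemma alg2 (a W P Z : ℝ) (h : a * a = 2) (ha : a ≠ 0) :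
    Z ^ 2 - (3 / a * W * P - Z) ^ 2 - 3 / 2 * P ^ 2
      = -(3 / a) * ((1 - W ^ 2) / a) * P ^ 2 + -(3 / a) * W * (2 * P ^ 1 * (a * W * P - Z)) := by
  field_simp
  ring_nf
  linear_combination (12 * W ^ 2 * P ^ 2 - 3 * P ^ 2) * h

set_option maxHeartbeats 2000000 in

/-- **inequality (3.26).** Spectral gap inequality: there is `c > 0` such that
for every `ζ ∈ H¹(ℝ) ∩ L²(ℝ)` orthogonal to `w'`,
`∫ |ζ'|² - f'(w)|ζ|² ≥ c ∫ |ζ|²`. -/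
theorem stmt18 :
    ∃ c > (0 : ℝ), ∀ ζ : ℝ → ℝ,
      Differentiable ℝ ζ →
      MemLp ζ 2 volume →
      MemLp (deriv ζ) 2 volume →
      (∫ x : ℝ, ζ x * deriv w x) = 0 →
      c * ∫ x : ℝ, ζ x ^ 2 ≤ ∫ x : ℝ, deriv ζ x ^ 2 - fp (w x) * ζ x ^ 2 := by
  refine ⟨3/2, by norm_num, fun ζ hd hm2 hm2' horth => ?_⟩
  have hcζ : Continuous ζ := hd.continuous
  have hmζ : AEStronglyMeasurable ζ volume := hcζ.aestronglyMeasurable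
  have hmζ' : AEStronglyMeasurable (deriv ζ) volume := hm2'.aestronglyMeasurable
  have Iζ2 : Integrable (fun x => ζ x ^ 2) := (memLp_two_iff_integrable_sq hmζ).1 hm2
  have Iζ'2 : Integrable (fun x => deriv ζ x ^ 2) := (memLp_two_iff_integrable_sq hmζ').1 hm2'
  have Iζζ' : Integrable (fun x => ζ x * deriv ζ x) := integrable_mul_of_sq hmζ hmζ' Iζ2 Iζ'2
  have hK2nn : 0 ≤ ∫ x, ζ x ^ 2 := integral_nonneg fun x => sq_nonneg _
  -- ζ² → 0 at ±∞
  have hsqd : ∀ x, HasDerivAt (fun y => ζ y ^ 2) (2 * (ζ x * deriv ζ x)) x := by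
    intro x
    have h := ((hd x).hasDerivAt).pow 2
    refine h.congr_deriv ?_
    ring
  have I2 : Integrable (fun x => 2 * (ζ x * deriv ζ x)) := Iζζ'.const_mul 2
  have hsqFTC : ∀ x : ℝ, ∫ t in (0:ℝ)..x, 2 * (ζ t * deriv ζ t) = ζ x ^ 2 - ζ 0 ^ 2 := fun x =>
    intervalIntegral.integral_eq_sub_of_hasDerivAt (fun t _ => hsqd t) I2.intervalIntegrable
  have hζ2top : Tendsto (fun x => ζ x ^ 2) atTop (𝓝 0) := by
    have h1 := intervalIntegral_tendsto_integral_Ioi (0:ℝ) I2.integrableOn (tendsto_id (α := ℝ))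
    have h2 : Tendsto (fun x => ζ x ^ 2) atTop
        (𝓝 (ζ 0 ^ 2 + ∫ t in Ioi (0:ℝ), 2 * (ζ t * deriv ζ t))) := by
      have e : (fun x => ζ x ^ 2)
          = fun x => ζ 0 ^ 2 + ∫ t in (0:ℝ)..x, 2 * (ζ t * deriv ζ t) := by
        funext x; rw [hsqFTC x]; ring
      rw [e]
      exact tendsto_const_nhds.add (by simpa using h1)
    have hL := limit_zero_of_integrable_atTop _ Iζ2 (fun x => sq_nonneg _) h2
    rwa [hL] at h2
  have hζ2bot : Tendsto (fun x => ζ x ^ 2) atBot (𝓝 0) := by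
    have h1 := intervalIntegral_tendsto_integral_Iic (0:ℝ) I2.integrableOn (tendsto_id (α := ℝ))
    have h2 : Tendsto (fun x => ζ x ^ 2) atBot
        (𝓝 (ζ 0 ^ 2 - ∫ t in Iic (0:ℝ), 2 * (ζ t * deriv ζ t))) := by
      have e : (fun x => ζ x ^ 2)
          = fun x => ζ 0 ^ 2 - ∫ t in x..(0:ℝ), 2 * (ζ t * deriv ζ t) := by
        funext x
        rw [intervalIntegral.integral_symm, hsqFTC x]; ring
      rw [e]
      exact tendsto_const_nhds.sub (by simpa using h1)
    have hL := limit_zero_of_integrable_atBot _ Iζ2 (fun x => sq_nonneg _) h2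
    rwa [hL] at h2
  have hζtop : Tendsto ζ atTop (𝓝 0) := tendsto_of_sq hζ2top
  have hζbot : Tendsto ζ atBot (𝓝 0) := tendsto_of_sq hζ2bot
  -- the function q = φ ζ and its antiderivative F
  set q : ℝ → ℝ := fun t => (1 - w t ^ 2) * ζ t with hqdef
  have hqc : Continuous q := phi_cont.mul hcζ
  have Iq : Integrable q :=
    integrable_mul_of_sq phi_cont.aestronglyMeasurable hmζ phi_sq_integrable Iζ2
  have hqtot : ∫ t, q t = 0 := by
    have e : (fun x => ζ x * deriv w x) = fun x => (Real.sqrt 2)⁻¹ * q x := by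
      funext x; rw [deriv_w x, hqdef]; field_simp
    rw [e] at horth
    rw [integral_const_mul] at horth
    rcases mul_eq_zero.1 horth with h | h
    · exact absurd h (by simpa using s2ne)
    · exact h
  set F : ℝ → ℝ := fun x => ∫ t in Iic x, q t with hFdef
  have hFd : ∀ x, HasDerivAt F (q x) x := hasDerivAt_integral_Iic q Iq hqc
  have hFc : Continuous F := by
    rw [continuous_iff_continuousAt]; exact fun x => (hFd x).continuousAt
  have hFbot : Tendsto F atBot (𝓝 0) := tendsto_integral_Iic_atBot q Iq
  have hFtop : Tendsto F atTop (𝓝 0) := by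
    have := tendsto_integral_Iic_atTop q Iq
    rwa [hqtot] at this
  have hFIoi : ∀ x, F x = - ∫ t in Ioi x, q t := by
    intro x
    have h := intervalIntegral.integral_Iic_add_Ioi (b := x) Iq.integrableOn Iq.integrableOn
    rw [hqtot] at h
    simp only [hFdef]
    linarith
  -- ψ
  set ψ : ℝ → ℝ := fun x => -(F x) / (1 - w x ^ 2) with hψdef
  have hψc : Continuous ψ := (hFc.neg).div phi_cont fun x => (phi_pos x).ne'
  have hφd : ∀ x, HasDerivAt (fun y => 1 - w y ^ 2)
      (-(Real.sqrt 2 * w x * (1 - w x ^ 2))) x := by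
    intro x
    have h2 := ((hw x).pow 2).const_sub 1
    refine h2.congr_deriv ?_
    field_simp
    linear_combination (w x - w x ^ 3) * s2
  have hψd : ∀ x, HasDerivAt ψ (Real.sqrt 2 * w x * ψ x - ζ x) x := by
    intro x
    have h1 := ((hFd x).neg).div (hφd x) (phi_pos x).ne'
    refine h1.congr_deriv ?_
    rw [hψdef, hqdef]
    simp only [Pi.neg_apply]
    have hp := (phi_pos x).ne'
    field_simp
    ring
  -- Cauchy–Schwarz bounds for F
  have hCSIic : ∀ x, F x ^ 2 ≤ (∫ t in Iic x, (1 - w t ^ 2) ^ 2) * ∫ t in Iic x, ζ t ^ 2 := by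
    intro x
    have := F_CS2 (Iic x) ζ hmζ Iζ2
    simpa [hFdef, hqdef] using this
  have hCSIoi : ∀ x, F x ^ 2 ≤ (∫ t in Ioi x, (1 - w t ^ 2) ^ 2) * ∫ t in Ioi x, ζ t ^ 2 := by
    intro x
    rw [hFIoi x, neg_sq]
    have := F_CS2 (Ioi x) ζ hmζ Iζ2
    simpa [hqdef] using this
  have hψsqeq : ∀ x, ψ x ^ 2 * (1 - w x ^ 2) ^ 2 = F x ^ 2 := by
    intro x
    rw [hψdef]
    field_simp
    rw [mul_div_assoc, div_self (phi_pos x).ne', mul_one]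
  -- tail bounds for ψ²
  have hψtail_bot : ∀ x ≤ (0:ℝ), ψ x ^ 2 ≤ 6 * ∫ t in Iic x, ζ t ^ 2 := by
    intro x hx
    have h1 := hCSIic x
    have h2 := phisq_setint_Iic x
    have hZ : 0 ≤ ∫ t in Iic x, ζ t ^ 2 :=
      setIntegral_nonneg measurableSet_Iic fun t _ => sq_nonneg _
    have hE : Real.exp (2 * Real.sqrt 2 * x) = Real.exp (Real.sqrt 2 * x) ^ 2 := by
      rw [sq, ← Real.exp_add]; ring_nf
    have hφx : Real.exp (Real.sqrt 2 * x) ≤ 1 - w x ^ 2 := by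
      have h := phi_ge x
      rwa [abs_of_nonpos hx, show -(Real.sqrt 2 * -x) = Real.sqrt 2 * x by ring] at h
    have hEp : (0:ℝ) < Real.exp (Real.sqrt 2 * x) := Real.exp_pos _
    have key := hψsqeq x
    rw [hE] at h2
    have h3 : F x ^ 2 ≤ 6 * Real.exp (Real.sqrt 2 * x) ^ 2 * ∫ t in Iic x, ζ t ^ 2 :=
      h1.trans (mul_le_mul_of_nonneg_right h2 hZ)
    have hsq : Real.exp (Real.sqrt 2 * x) ^ 2 ≤ (1 - w x ^ 2) ^ 2 := by nlinarith
    have h4 := mul_le_mul_of_nonneg_left hsq (sq_nonneg (ψ x))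
    nlinarith [mul_pos hEp hEp]
  have hψtail_top : ∀ x, (0:ℝ) ≤ x → ψ x ^ 2 ≤ 6 * ∫ t in Ioi x, ζ t ^ 2 := by
    intro x hx
    have h1 := hCSIoi x
    have h2 := phisq_setint_Ioi x
    have hZ : 0 ≤ ∫ t in Ioi x, ζ t ^ 2 :=
      setIntegral_nonneg measurableSet_Ioi fun t _ => sq_nonneg _
    have hE : Real.exp (-(2 * Real.sqrt 2 * x)) = Real.exp (-(Real.sqrt 2 * x)) ^ 2 := by
      rw [sq, ← Real.exp_add]; ring_nf
    have hφx : Real.exp (-(Real.sqrt 2 * x)) ≤ 1 - w x ^ 2 := by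
      have h := phi_ge x
      rwa [abs_of_nonneg hx] at h
    have hEp : (0:ℝ) < Real.exp (-(Real.sqrt 2 * x)) := Real.exp_pos _
    have key := hψsqeq x
    rw [hE] at h2
    have h3 : F x ^ 2 ≤ 6 * Real.exp (-(Real.sqrt 2 * x)) ^ 2 * ∫ t in Ioi x, ζ t ^ 2 :=
      h1.trans (mul_le_mul_of_nonneg_right h2 hZ)
    have hsq : Real.exp (-(Real.sqrt 2 * x)) ^ 2 ≤ (1 - w x ^ 2) ^ 2 := by nlinarith
    have h4 := mul_le_mul_of_nonneg_left hsq (sq_nonneg (ψ x))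
    nlinarith [mul_pos hEp hEp]
  -- ψ → 0 at ±∞
  have hψ2top : Tendsto (fun x => ψ x ^ 2) atTop (𝓝 0) := by
    have htail := (tendsto_integral_Ioi_atTop (fun t => ζ t ^ 2) Iζ2).const_mul (6:ℝ)
    refine squeeze_zero' (Eventually.of_forall fun x => sq_nonneg _)
      ((eventually_ge_atTop (0:ℝ)).mono fun x hx => hψtail_top x hx) ?_
    simpa using htail
  have hψ2bot : Tendsto (fun x => ψ x ^ 2) atBot (𝓝 0) := by
    have htail := (tendsto_integral_Iic_atBot (fun t => ζ t ^ 2) Iζ2).const_mul (6:ℝ)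
    refine squeeze_zero' (Eventually.of_forall fun x => sq_nonneg _)
      ((eventually_le_atBot (0:ℝ)).mono fun x hx => hψtail_bot x hx) ?_
    simpa using htail
  have hψtop : Tendsto ψ atTop (𝓝 0) := tendsto_of_sq hψ2top
  have hψbot : Tendsto ψ atBot (𝓝 0) := tendsto_of_sq hψ2bot
  -- q2 = φ ζ² and its tail integrals
  set q2 : ℝ → ℝ := fun t => (1 - w t ^ 2) * ζ t ^ 2 with hq2def
  have hq2c : Continuous q2 := phi_cont.mul (hcζ.pow 2)
  have hq2nn : ∀ t, 0 ≤ q2 t := fun t => mul_nonneg (phi_pos t).le (sq_nonneg _)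
  have Iq2 : Integrable q2 := by
    refine Iζ2.mono' hq2c.aestronglyMeasurable (ae_of_all _ fun t => ?_)
    rw [Real.norm_eq_abs, abs_of_nonneg (hq2nn t)]
    simp only [hq2def]
    nlinarith [phi_le_one t, sq_nonneg (ζ t), phi_pos t, sq_nonneg (w t * ζ t)]
  have hCS1Ioi : ∀ x, F x ^ 2 ≤ (∫ t in Ioi x, (1 - w t ^ 2)) * ∫ t in Ioi x, q2 t := by
    intro x
    rw [hFIoi x, neg_sq]
    have := F_CS1 (Ioi x) ζ hmζ (by simpa [hq2def] using Iq2)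
    simpa [hqdef, hq2def] using this
  have hCS1Iic : ∀ x, F x ^ 2 ≤ (∫ t in Iic x, (1 - w t ^ 2)) * ∫ t in Iic x, q2 t := by
    intro x
    have := F_CS1 (Iic x) ζ hmζ (by simpa [hq2def] using Iq2)
    simpa [hFdef, hqdef, hq2def] using this
  set G : ℝ → ℝ := fun x => ∫ t in Ioi x, q2 t with hGdef
  set Gm : ℝ → ℝ := fun x => ∫ t in Iic x, q2 t with hGmdef
  have hGmd : ∀ x, HasDerivAt Gm (q2 x) x := hasDerivAt_integral_Iic q2 Iq2 hq2c
  have hGeq : ∀ x, G x = (∫ t, q2 t) - Gm x := by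
    intro x
    have h := intervalIntegral.integral_Iic_add_Ioi (b := x) Iq2.integrableOn Iq2.integrableOn
    simp only [hGdef, hGmdef]
    linarith
  have hGd : ∀ x, HasDerivAt G (-(q2 x)) x := by
    intro x
    have e : G = fun y => (∫ t, q2 t) - Gm y := funext hGeq
    rw [e]
    simpa using (hGmd x).const_sub (∫ t, q2 t)
  have hGc : Continuous G := by
    rw [continuous_iff_continuousAt]; exact fun x => (hGd x).continuousAt
  have hGmc : Continuous Gm := by
    rw [continuous_iff_continuousAt]; exact fun x => (hGmd x).continuousAt
  have hGnn : ∀ x, 0 ≤ G x := fun x => setIntegral_nonneg measurableSet_Ioi fun t _ => hq2nn t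
  have hGmnn : ∀ x, 0 ≤ Gm x := fun x => setIntegral_nonneg measurableSet_Iic fun t _ => hq2nn t
  -- pointwise bounds ψ² ≤ 3·e^{±√2 x}·tail
  have hψptIoi : ∀ x, 0 ≤ x → ψ x ^ 2 ≤ 3 * (Real.exp (Real.sqrt 2 * x) * G x) := by
    intro x hx
    have h1 := hCS1Ioi x
    have h2 := phi_setint_Ioi x
    have hφx : Real.exp (-(Real.sqrt 2 * x)) ≤ 1 - w x ^ 2 := by
      have h := phi_ge x; rwa [abs_of_nonneg hx] at h
    have hEp : (0:ℝ) < Real.exp (-(Real.sqrt 2 * x)) := Real.exp_pos _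
    have key := hψsqeq x
    have h3 : F x ^ 2 ≤ 3 * Real.exp (-(Real.sqrt 2 * x)) * G x :=
      h1.trans (mul_le_mul_of_nonneg_right h2 (hGnn x))
    have hES : Real.exp (-(Real.sqrt 2 * x)) * Real.exp (Real.sqrt 2 * x) = 1 := by
      rw [← Real.exp_add]; simp
    have hsq : Real.exp (-(Real.sqrt 2 * x)) ^ 2 ≤ (1 - w x ^ 2) ^ 2 := by nlinarith
    have h4 := mul_le_mul_of_nonneg_left hsq (sq_nonneg (ψ x))
    have h5 : ψ x ^ 2 * Real.exp (-(Real.sqrt 2 * x)) ^ 2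
        ≤ 3 * Real.exp (-(Real.sqrt 2 * x)) * G x := by linarith
    have h6 := mul_le_mul_of_nonneg_right h5 (sq_nonneg (Real.exp (Real.sqrt 2 * x)))
    have h7 : ψ x ^ 2 * Real.exp (-(Real.sqrt 2 * x)) ^ 2 * Real.exp (Real.sqrt 2 * x) ^ 2
        = ψ x ^ 2 := by
      have h9 : Real.exp (-(Real.sqrt 2 * x)) ^ 2 * Real.exp (Real.sqrt 2 * x) ^ 2 = 1 := by
        rw [← mul_pow, hES, one_pow]
      rw [mul_assoc, h9, mul_one]
    have h8 : 3 * Real.exp (-(Real.sqrt 2 * x)) * G x * Real.exp (Real.sqrt 2 * x) ^ 2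
        = 3 * (Real.exp (Real.sqrt 2 * x) * G x) := by
      linear_combination (3 * G x * Real.exp (Real.sqrt 2 * x)) * hES
    linarith
  have hψptIic : ∀ x ≤ (0:ℝ), ψ x ^ 2 ≤ 3 * (Real.exp (-(Real.sqrt 2 * x)) * Gm x) := by
    intro x hx
    have h1 := hCS1Iic x
    have h2 := phi_setint_Iic x
    have hφx : Real.exp (Real.sqrt 2 * x) ≤ 1 - w x ^ 2 := by
      have h := phi_ge x
      rwa [abs_of_nonpos hx, show -(Real.sqrt 2 * -x) = Real.sqrt 2 * x by ring] at h
    have hEp : (0:ℝ) < Real.exp (Real.sqrt 2 * x) := Real.exp_pos _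
    have key := hψsqeq x
    have h3 : F x ^ 2 ≤ 3 * Real.exp (Real.sqrt 2 * x) * Gm x :=
      h1.trans (mul_le_mul_of_nonneg_right h2 (hGmnn x))
    have hES : Real.exp (Real.sqrt 2 * x) * Real.exp (-(Real.sqrt 2 * x)) = 1 := by
      rw [← Real.exp_add]; simp
    have hsq : Real.exp (Real.sqrt 2 * x) ^ 2 ≤ (1 - w x ^ 2) ^ 2 := by nlinarith
    have h4 := mul_le_mul_of_nonneg_left hsq (sq_nonneg (ψ x))
    have h5 : ψ x ^ 2 * Real.exp (Real.sqrt 2 * x) ^ 2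
        ≤ 3 * Real.exp (Real.sqrt 2 * x) * Gm x := by linarith
    have h6 := mul_le_mul_of_nonneg_right h5 (sq_nonneg (Real.exp (-(Real.sqrt 2 * x))))
    have h7 : ψ x ^ 2 * Real.exp (Real.sqrt 2 * x) ^ 2 * Real.exp (-(Real.sqrt 2 * x)) ^ 2
        = ψ x ^ 2 := by
      have h9 : Real.exp (Real.sqrt 2 * x) ^ 2 * Real.exp (-(Real.sqrt 2 * x)) ^ 2 = 1 := by
        rw [← mul_pow, hES, one_pow]
      rw [mul_assoc, h9, mul_one]
    have h8 : 3 * Real.exp (Real.sqrt 2 * x) * Gm x * Real.exp (-(Real.sqrt 2 * x)) ^ 2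
        = 3 * (Real.exp (-(Real.sqrt 2 * x)) * Gm x) := by
      linear_combination (3 * Gm x * Real.exp (-(Real.sqrt 2 * x))) * hES
    linarith
  -- tail estimates
  have htail4 : ∀ R, 0 ≤ R → Real.exp (Real.sqrt 2 * R) * G R ≤ 4 * ∫ x, ζ x ^ 2 := by
    intro R hR
    have hmono : ∫ t in Ioi R, Real.exp (Real.sqrt 2 * R) * q2 t
        ≤ ∫ t in Ioi R, 4 * ζ t ^ 2 := by
      refine setIntegral_mono_on ((Iq2.const_mul _).integrableOn)
        ((Iζ2.const_mul 4).integrableOn) measurableSet_Ioi fun t ht => ?_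
      have hp := phi_le t
      have h5 : Real.exp (Real.sqrt 2 * R) * Real.exp (-(Real.sqrt 2 * |t|)) ≤ 1 := by
        rw [← Real.exp_add, Real.exp_le_one_iff]
        nlinarith [s2pos, le_abs_self t, le_of_lt (mem_Ioi.1 ht)]
      simp only [hq2def]
      nlinarith [sq_nonneg (ζ t), Real.exp_pos (Real.sqrt 2 * R), phi_pos t,
        Real.exp_pos (-(Real.sqrt 2 * |t|)), mul_le_mul_of_nonneg_right hp
          (Real.exp_pos (Real.sqrt 2 * R)).le]
    have hend : ∫ t in Ioi R, 4 * ζ t ^ 2 ≤ 4 * ∫ x, ζ x ^ 2 := by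
      rw [integral_const_mul]
      have := setIntegral_le_integral (s := Ioi R) Iζ2 (ae_of_all _ fun t => sq_nonneg (ζ t))
      linarith [this]
    calc Real.exp (Real.sqrt 2 * R) * G R
        = ∫ t in Ioi R, Real.exp (Real.sqrt 2 * R) * q2 t := by
          rw [integral_const_mul, hGdef]
      _ ≤ 4 * ∫ x, ζ x ^ 2 := hmono.trans hend
  have htail4m : ∀ R ≤ (0:ℝ), Real.exp (-(Real.sqrt 2 * R)) * Gm R ≤ 4 * ∫ x, ζ x ^ 2 := by
    intro R hR
    have hmono : ∫ t in Iic R, Real.exp (-(Real.sqrt 2 * R)) * q2 t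
        ≤ ∫ t in Iic R, 4 * ζ t ^ 2 := by
      refine setIntegral_mono_on ((Iq2.const_mul _).integrableOn)
        ((Iζ2.const_mul 4).integrableOn) measurableSet_Iic fun t ht => ?_
      have hp := phi_le t
      have h5 : Real.exp (-(Real.sqrt 2 * R)) * Real.exp (-(Real.sqrt 2 * |t|)) ≤ 1 := by
        rw [← Real.exp_add, Real.exp_le_one_iff]
        nlinarith [s2pos, neg_le_abs t, mem_Iic.1 ht]
      simp only [hq2def]
      nlinarith [sq_nonneg (ζ t), Real.exp_pos (-(Real.sqrt 2 * R)), phi_pos t,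
        Real.exp_pos (-(Real.sqrt 2 * |t|)), mul_le_mul_of_nonneg_right hp
          (Real.exp_pos (-(Real.sqrt 2 * R))).le]
    have hend : ∫ t in Iic R, 4 * ζ t ^ 2 ≤ 4 * ∫ x, ζ x ^ 2 := by
      rw [integral_const_mul]
      have := setIntegral_le_integral (s := Iic R) Iζ2 (ae_of_all _ fun t => sq_nonneg (ζ t))
      linarith [this]
    calc Real.exp (-(Real.sqrt 2 * R)) * Gm R
        = ∫ t in Iic R, Real.exp (-(Real.sqrt 2 * R)) * q2 t := by
          rw [integral_const_mul, hGmdef]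
      _ ≤ 4 * ∫ x, ζ x ^ 2 := hmono.trans hend
  -- pointwise bound on the weighted q2
  have hptq2 : ∀ x, 0 ≤ x → Real.exp (Real.sqrt 2 * x) * q2 x ≤ 4 * ζ x ^ 2 := by
    intro x hx
    have hp := phi_le x
    have h5 : Real.exp (Real.sqrt 2 * x) * Real.exp (-(Real.sqrt 2 * |x|)) ≤ 1 := by
      rw [← Real.exp_add, Real.exp_le_one_iff]
      nlinarith [s2pos, le_abs_self x]
    simp only [hq2def]
    nlinarith [sq_nonneg (ζ x), Real.exp_pos (Real.sqrt 2 * x), phi_pos x,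
      Real.exp_pos (-(Real.sqrt 2 * |x|)), mul_le_mul_of_nonneg_right hp
        (Real.exp_pos (Real.sqrt 2 * x)).le]
  have hptq2m : ∀ x ≤ (0:ℝ), Real.exp (-(Real.sqrt 2 * x)) * q2 x ≤ 4 * ζ x ^ 2 := by
    intro x hx
    have hp := phi_le x
    have h5 : Real.exp (-(Real.sqrt 2 * x)) * Real.exp (-(Real.sqrt 2 * |x|)) ≤ 1 := by
      rw [← Real.exp_add, Real.exp_le_one_iff]
      nlinarith [s2pos, neg_le_abs x]
    simp only [hq2def]
    nlinarith [sq_nonneg (ζ x), Real.exp_pos (-(Real.sqrt 2 * x)), phi_pos x,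
      Real.exp_pos (-(Real.sqrt 2 * |x|)), mul_le_mul_of_nonneg_right hp
        (Real.exp_pos (-(Real.sqrt 2 * x))).le]
  -- interval bound on [0,R]
  have hIbound : ∀ R, 0 ≤ R → ∫ x in (0:ℝ)..R, ψ x ^ 2 ≤ 18 * ∫ x, ζ x ^ 2 := by
    intro R hR
    have hu : ∀ x, HasDerivAt (fun y => Real.exp (Real.sqrt 2 * y) * G y / Real.sqrt 2)
        (Real.exp (Real.sqrt 2 * x) * G x - Real.exp (Real.sqrt 2 * x) * q2 x / Real.sqrt 2)
        x := by
      intro x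
      have h := ((exp_mul_hasDerivAt (Real.sqrt 2) x).mul (hGd x)).div_const (Real.sqrt 2)
      refine h.congr_deriv ?_
      field_simp
      ring
    have hcont1 : Continuous fun x => Real.exp (Real.sqrt 2 * x) * G x :=
      (cont_exp_mul _).mul hGc
    have hcont2 : Continuous fun x => Real.exp (Real.sqrt 2 * x) * q2 x / Real.sqrt 2 :=
      ((cont_exp_mul _).mul hq2c).div_const _
    have hFTC : ∫ x in (0:ℝ)..R, (Real.exp (Real.sqrt 2 * x) * G x
          - Real.exp (Real.sqrt 2 * x) * q2 x / Real.sqrt 2)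
        = Real.exp (Real.sqrt 2 * R) * G R / Real.sqrt 2
          - Real.exp (Real.sqrt 2 * 0) * G 0 / Real.sqrt 2 :=
      intervalIntegral.integral_eq_sub_of_hasDerivAt (fun x _ => hu x)
        ((hcont1.sub hcont2).intervalIntegrable _ _)
    rw [intervalIntegral.integral_sub (hcont1.intervalIntegrable _ _)
      (hcont2.intervalIntegrable _ _)] at hFTC
    have hq2i : ∫ x in (0:ℝ)..R, Real.exp (Real.sqrt 2 * x) * q2 x ≤ 4 * ∫ x, ζ x ^ 2 := by
      have hm := intervalIntegral.integral_mono_on hR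
        (((cont_exp_mul _).mul hq2c).intervalIntegrable _ _)
        ((Iζ2.const_mul 4).intervalIntegrable)
        (fun x hx => hptq2 x hx.1)
      refine hm.trans ?_
      rw [intervalIntegral.integral_of_le hR]
      have h1 : ∫ t in Ioc 0 R, 4 * ζ t ^ 2 ≤ 4 * ∫ x, ζ x ^ 2 := by
        rw [integral_const_mul]
        have := setIntegral_le_integral (s := Ioc 0 R) Iζ2 (ae_of_all _ fun t => sq_nonneg (ζ t))
        linarith [this]
      exact h1
    have hdivint : ∫ x in (0:ℝ)..R, Real.exp (Real.sqrt 2 * x) * q2 x / Real.sqrt 2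
        = (∫ x in (0:ℝ)..R, Real.exp (Real.sqrt 2 * x) * q2 x) / Real.sqrt 2 :=
      intervalIntegral.integral_div _ _
    have huR : Real.exp (Real.sqrt 2 * R) * G R / Real.sqrt 2 ≤ 3 * ∫ x, ζ x ^ 2 := by
      have h := htail4 R hR
      rw [div_le_iff₀ s2pos]
      nlinarith [s2ge, hK2nn]
    have hu0 : 0 ≤ Real.exp (Real.sqrt 2 * 0) * G 0 / Real.sqrt 2 :=
      div_nonneg (mul_nonneg (Real.exp_pos _).le (hGnn 0)) s2pos.le
    have hEG : ∫ x in (0:ℝ)..R, Real.exp (Real.sqrt 2 * x) * G x ≤ 6 * ∫ x, ζ x ^ 2 := by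
      have hq2div : (∫ x in (0:ℝ)..R, Real.exp (Real.sqrt 2 * x) * q2 x) / Real.sqrt 2
          ≤ 3 * ∫ x, ζ x ^ 2 := by
        rw [div_le_iff₀ s2pos]
        have hnn : 0 ≤ ∫ x in (0:ℝ)..R, Real.exp (Real.sqrt 2 * x) * q2 x := by
          apply intervalIntegral.integral_nonneg hR
          intro x _
          exact mul_nonneg (Real.exp_pos _).le (hq2nn x)
        nlinarith [s2ge, hK2nn]
      rw [hdivint] at hFTC
      linarith
    have hmono : ∫ x in (0:ℝ)..R, ψ x ^ 2
        ≤ ∫ x in (0:ℝ)..R, 3 * (Real.exp (Real.sqrt 2 * x) * G x) := by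
      apply intervalIntegral.integral_mono_on hR ((hψc.pow 2).intervalIntegrable _ _)
        ((continuous_const.mul hcont1).intervalIntegrable _ _)
      exact fun x hx => hψptIoi x hx.1
    rw [intervalIntegral.integral_const_mul] at hmono
    linarith
  have hIboundm : ∀ R, 0 ≤ R → ∫ x in (-R)..(0:ℝ), ψ x ^ 2 ≤ 18 * ∫ x, ζ x ^ 2 := by
    intro R hR
    have hu : ∀ x, HasDerivAt (fun y => -(Real.exp (-(Real.sqrt 2) * y) * Gm y) / Real.sqrt 2)
        (Real.exp (-(Real.sqrt 2) * x) * Gm x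
          - Real.exp (-(Real.sqrt 2) * x) * q2 x / Real.sqrt 2) x := by
      intro x
      have h := (((exp_mul_hasDerivAt (-(Real.sqrt 2)) x).mul (hGmd x)).neg).div_const
        (Real.sqrt 2)
      refine h.congr_deriv ?_
      field_simp
      ring
    have hen : ∀ x : ℝ, Real.exp (-(Real.sqrt 2) * x) = Real.exp (-(Real.sqrt 2 * x)) := by
      intro x; ring_nf
    have hcont1 : Continuous fun x => Real.exp (-(Real.sqrt 2) * x) * Gm x :=
      (cont_exp_mul _).mul hGmc
    have hcont2 : Continuous fun x => Real.exp (-(Real.sqrt 2) * x) * q2 x / Real.sqrt 2 :=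
      ((cont_exp_mul _).mul hq2c).div_const _
    have hFTC : ∫ x in (-R)..(0:ℝ), (Real.exp (-(Real.sqrt 2) * x) * Gm x
          - Real.exp (-(Real.sqrt 2) * x) * q2 x / Real.sqrt 2)
        = -(Real.exp (-(Real.sqrt 2) * 0) * Gm 0) / Real.sqrt 2
          - -(Real.exp (-(Real.sqrt 2) * (-R)) * Gm (-R)) / Real.sqrt 2 :=
      intervalIntegral.integral_eq_sub_of_hasDerivAt (fun x _ => hu x)
        ((hcont1.sub hcont2).intervalIntegrable _ _)
    rw [intervalIntegral.integral_sub (hcont1.intervalIntegrable _ _)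
      (hcont2.intervalIntegrable _ _)] at hFTC
    have hRle : (-R) ≤ (0:ℝ) := by linarith
    have hq2i : ∫ x in (-R)..(0:ℝ), Real.exp (-(Real.sqrt 2) * x) * q2 x
        ≤ 4 * ∫ x, ζ x ^ 2 := by
      have hm := intervalIntegral.integral_mono_on hRle
        (((cont_exp_mul (-(Real.sqrt 2))).mul hq2c).intervalIntegrable _ _)
        ((Iζ2.const_mul 4).intervalIntegrable)
        (fun x hx => by simp only [Pi.mul_apply]; rw [hen x]; exact hptq2m x hx.2)
      refine hm.trans ?_
      rw [intervalIntegral.integral_of_le hRle]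
      have h1 : ∫ t in Ioc (-R) 0, 4 * ζ t ^ 2 ≤ 4 * ∫ x, ζ x ^ 2 := by
        rw [integral_const_mul]
        have := setIntegral_le_integral (s := Ioc (-R) 0) Iζ2 (ae_of_all _ fun t => sq_nonneg (ζ t))
        linarith [this]
      exact h1
    have hdivint : ∫ x in (-R)..(0:ℝ), Real.exp (-(Real.sqrt 2) * x) * q2 x / Real.sqrt 2
        = (∫ x in (-R)..(0:ℝ), Real.exp (-(Real.sqrt 2) * x) * q2 x) / Real.sqrt 2 :=
      intervalIntegral.integral_div _ _
    have huR : Real.exp (-(Real.sqrt 2) * (-R)) * Gm (-R) / Real.sqrt 2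
        ≤ 3 * ∫ x, ζ x ^ 2 := by
      have h := htail4m (-R) (by linarith)
      rw [hen (-R)] at *
      rw [div_le_iff₀ s2pos]
      nlinarith [s2ge, hK2nn]
    have hu0 : 0 ≤ Real.exp (-(Real.sqrt 2) * 0) * Gm 0 / Real.sqrt 2 :=
      div_nonneg (mul_nonneg (Real.exp_pos _).le (hGmnn 0)) s2pos.le
    have hEG : ∫ x in (-R)..(0:ℝ), Real.exp (-(Real.sqrt 2) * x) * Gm x
        ≤ 6 * ∫ x, ζ x ^ 2 := by
      have hq2div : (∫ x in (-R)..(0:ℝ), Real.exp (-(Real.sqrt 2) * x) * q2 x) / Real.sqrt 2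
          ≤ 3 * ∫ x, ζ x ^ 2 := by
        rw [div_le_iff₀ s2pos]
        have hnn : 0 ≤ ∫ x in (-R)..(0:ℝ), Real.exp (-(Real.sqrt 2) * x) * q2 x := by
          apply intervalIntegral.integral_nonneg hRle
          intro x _
          exact mul_nonneg (Real.exp_pos _).le (hq2nn x)
        nlinarith [s2ge, hK2nn]
      rw [hdivint] at hFTC
      have hneg : -(Real.exp (-(Real.sqrt 2) * 0) * Gm 0) / Real.sqrt 2
          = -(Real.exp (-(Real.sqrt 2) * 0) * Gm 0 / Real.sqrt 2) := by ring
      have hneg2 : -(Real.exp (-(Real.sqrt 2) * (-R)) * Gm (-R)) / Real.sqrt 2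
          = -(Real.exp (-(Real.sqrt 2) * (-R)) * Gm (-R) / Real.sqrt 2) := by ring
      rw [hneg, hneg2] at hFTC
      linarith
    have hmono : ∫ x in (-R)..(0:ℝ), ψ x ^ 2
        ≤ ∫ x in (-R)..(0:ℝ), 3 * (Real.exp (-(Real.sqrt 2) * x) * Gm x) := by
      apply intervalIntegral.integral_mono_on hRle ((hψc.pow 2).intervalIntegrable _ _)
        ((continuous_const.mul hcont1).intervalIntegrable _ _)
      intro x hx
      simp only [Pi.mul_apply, Pi.pow_apply]
      rw [hen x]
      exact hψptIic x hx.2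
    rw [intervalIntegral.integral_const_mul] at hmono
    linarith
  -- integrability of ψ²
  have IψIoi : IntegrableOn (fun x => ψ x ^ 2) (Ioi (0:ℝ)) := by
    refine integrableOn_Ioi_of_intervalIntegral_norm_bounded (18 * ∫ x, ζ x ^ 2) 0
      (fun R : ℝ => (hψc.pow 2).integrableOn_Ioc) (tendsto_id (α := ℝ)) ?_
    filter_upwards [eventually_ge_atTop (0:ℝ)] with R hR
    have e : ∫ x in (0:ℝ)..(id R), ‖ψ x ^ 2‖ = ∫ x in (0:ℝ)..R, ψ x ^ 2 := by
      simp only [id_eq]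
      apply intervalIntegral.integral_congr
      intro x _
      exact norm_of_nonneg (sq_nonneg _)
    rw [e]
    exact hIbound R hR
  have IψIic : IntegrableOn (fun x => ψ x ^ 2) (Iic (0:ℝ)) := by
    refine integrableOn_Iic_of_intervalIntegral_norm_bounded (18 * ∫ x, ζ x ^ 2) 0
      (a := fun R : ℝ => -R) (l := atTop)
      (fun R : ℝ => (hψc.pow 2).integrableOn_Ioc) tendsto_neg_atTop_atBot ?_
    filter_upwards [eventually_ge_atTop (0:ℝ)] with R hR
    have e : ∫ x in (-R)..(0:ℝ), ‖ψ x ^ 2‖ = ∫ x in (-R)..(0:ℝ), ψ x ^ 2 := by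
      apply intervalIntegral.integral_congr
      intro x _
      exact norm_of_nonneg (sq_nonneg _)
    rw [e]
    exact hIboundm R hR
  have Iψ2 : Integrable fun x => ψ x ^ 2 := by
    rw [← integrableOn_univ, ← Iic_union_Ioi (a := (0:ℝ))]
    exact IψIic.union IψIoi
  -- more integrability facts
  have Iψζ : Integrable (fun x => ψ x * ζ x) :=
    integrable_mul_of_sq hψc.aestronglyMeasurable hmζ Iψ2 Iζ2
  have Iwψ2 : Integrable (fun x => (w x * ψ x) ^ 2) := by
    refine Iψ2.mono' ((w_cont.mul hψc).pow 2).aestronglyMeasurable (ae_of_all _ fun x => ?_)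
    rw [Real.norm_eq_abs, abs_of_nonneg (sq_nonneg _)]
    nlinarith [w_sq_lt_one x, sq_nonneg (ψ x), sq_nonneg (w x * ψ x)]
  have Iwζ2 : Integrable (fun x => (w x * ζ x) ^ 2) := by
    refine Iζ2.mono' ((w_cont.mul hcζ).pow 2).aestronglyMeasurable (ae_of_all _ fun x => ?_)
    rw [Real.norm_eq_abs, abs_of_nonneg (sq_nonneg _)]
    nlinarith [w_sq_lt_one x, sq_nonneg (ζ x), sq_nonneg (w x * ζ x)]
  have Iwψζ : Integrable (fun x => w x * ψ x * ζ x) :=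
    integrable_mul_of_sq (w_cont.mul hψc).aestronglyMeasurable hmζ Iwψ2 Iζ2
  have Iwζψ : Integrable (fun x => w x * ζ x * ψ x) :=
    integrable_mul_of_sq (w_cont.mul hcζ).aestronglyMeasurable hψc.aestronglyMeasurable Iwζ2 Iψ2
  have Iζ'ψ : Integrable (fun x => deriv ζ x * ψ x) :=
    integrable_mul_of_sq hmζ' hψc.aestronglyMeasurable Iζ'2 Iψ2
  have Iwζζ' : Integrable (fun x => w x * ζ x * deriv ζ x) :=
    integrable_mul_of_sq (w_cont.mul hcζ).aestronglyMeasurable hmζ' Iwζ2 Iζ'2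
  -- identity 3 : ∫ (Aζ)ψ = ∫ ζ²
  have IAzψ : Integrable (fun x => (deriv ζ x + Real.sqrt 2 * w x * ζ x) * ψ x) := by
    have e : (fun x => (deriv ζ x + Real.sqrt 2 * w x * ζ x) * ψ x)
        = fun x => deriv ζ x * ψ x + Real.sqrt 2 * (w x * ζ x * ψ x) := by
      funext x; ring
    rw [e]
    exact Iζ'ψ.add (Iwζψ.const_mul _)
  have ID3 : ∫ x, (deriv ζ x + Real.sqrt 2 * w x * ζ x) * ψ x = ∫ x, ζ x ^ 2 := by
    have hg3d : ∀ x, HasDerivAt (fun y => ζ y * ψ y)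
        ((deriv ζ x + Real.sqrt 2 * w x * ζ x) * ψ x - ζ x ^ 2) x := by
      intro x
      have h := ((hd x).hasDerivAt).mul (hψd x)
      refine h.congr_deriv ?_
      ring
    have Ig3' : Integrable (fun x => (deriv ζ x + Real.sqrt 2 * w x * ζ x) * ψ x - ζ x ^ 2) :=
      IAzψ.sub Iζ2
    have hg3top : Tendsto (fun x => ζ x * ψ x) atTop (𝓝 0) := by
      simpa using hζtop.mul hψtop
    have hg3bot : Tendsto (fun x => ζ x * ψ x) atBot (𝓝 0) := by
      simpa using hζbot.mul hψbot
    have h0 := integral_deriv_eq_zero (fun y => ζ y * ψ y)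
      (fun x => (deriv ζ x + Real.sqrt 2 * w x * ζ x) * ψ x - ζ x ^ 2) hg3d Ig3' hg3top hg3bot
    have hsub : ∫ x, ((deriv ζ x + Real.sqrt 2 * w x * ζ x) * ψ x - ζ x ^ 2)
        = (∫ x, (deriv ζ x + Real.sqrt 2 * w x * ζ x) * ψ x) - ∫ x, ζ x ^ 2 :=
      integral_sub IAzψ Iζ2
    rw [hsub] at h0
    linarith
  -- identity 2 : ∫ ζ² = ∫ (Bψ)² + (3/2) ∫ ψ²
  have IBψ2 : Integrable (fun x => (3 / Real.sqrt 2 * w x * ψ x - ζ x) ^ 2) := by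
    have e : (fun x => (3 / Real.sqrt 2 * w x * ψ x - ζ x) ^ 2)
        = fun x => (3 / Real.sqrt 2) ^ 2 * (w x * ψ x) ^ 2
            - 2 * (3 / Real.sqrt 2) * (w x * ψ x * ζ x) + ζ x ^ 2 := by
      funext x; ring
    rw [e]
    exact ((Iwψ2.const_mul _).sub (Iwψζ.const_mul _)).add Iζ2
  have hψ2le : ∫ x, ψ x ^ 2 ≤ 2 / 3 * ∫ x, ζ x ^ 2 := by
    have hg2d : ∀ x, HasDerivAt (fun y => -(3 / Real.sqrt 2) * w y * ψ y ^ 2)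
        (ζ x ^ 2 - (3 / Real.sqrt 2 * w x * ψ x - ζ x) ^ 2 - 3 / 2 * ψ x ^ 2) x := by
      intro x
      have harg : HasDerivAt (fun y => -(3 / Real.sqrt 2) * w y)
          (-(3 / Real.sqrt 2) * ((1 - w x ^ 2) / Real.sqrt 2)) x := (hw x).const_mul _
      have h := harg.mul ((hψd x).pow 2)
      refine h.congr_deriv ?_
      exact (alg2 (Real.sqrt 2) (w x) (ψ x) (ζ x) s2 s2ne).symm
    have ID2' : Integrable (fun x => ζ x ^ 2 - (3 / Real.sqrt 2 * w x * ψ x - ζ x) ^ 2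
        - 3 / 2 * ψ x ^ 2) := (Iζ2.sub IBψ2).sub (Iψ2.const_mul _)
    have hg2top : Tendsto (fun y => -(3 / Real.sqrt 2) * w y * ψ y ^ 2) atTop (𝓝 0) := by
      rw [tendsto_zero_iff_abs_tendsto_zero]
      refine squeeze_zero (fun x => abs_nonneg _) (fun x => ?_) (by simpa using hψ2top.const_mul (3:ℝ))
      simp only [Function.comp_apply]
      rw [abs_mul, abs_mul, abs_of_nonneg (sq_nonneg (ψ x))]
      have h1 : |(-(3 / Real.sqrt 2))| ≤ 3 := by
        rw [abs_neg, abs_of_nonneg (by positivity)]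
        rw [div_le_iff₀ s2pos]
        nlinarith [s2ge]
      have h2 : |(-(3 / Real.sqrt 2))| * |w x| ≤ 3 := by
        have := mul_le_mul h1 (w_abs_le x) (abs_nonneg _) (by norm_num)
        simpa using this
      exact mul_le_mul_of_nonneg_right h2 (sq_nonneg _)
    have hg2bot : Tendsto (fun y => -(3 / Real.sqrt 2) * w y * ψ y ^ 2) atBot (𝓝 0) := by
      rw [tendsto_zero_iff_abs_tendsto_zero]
      refine squeeze_zero (fun x => abs_nonneg _) (fun x => ?_) (by simpa using hψ2bot.const_mul (3:ℝ))
      simp only [Function.comp_apply]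
      rw [abs_mul, abs_mul, abs_of_nonneg (sq_nonneg (ψ x))]
      have h1 : |(-(3 / Real.sqrt 2))| ≤ 3 := by
        rw [abs_neg, abs_of_nonneg (by positivity)]
        rw [div_le_iff₀ s2pos]
        nlinarith [s2ge]
      have h2 : |(-(3 / Real.sqrt 2))| * |w x| ≤ 3 := by
        have := mul_le_mul h1 (w_abs_le x) (abs_nonneg _) (by norm_num)
        simpa using this
      exact mul_le_mul_of_nonneg_right h2 (sq_nonneg _)
    have h0 := integral_deriv_eq_zero _ _ hg2d ID2' hg2top hg2bot
    have i1 : Integrable (fun x => ζ x ^ 2 - (3 / Real.sqrt 2 * w x * ψ x - ζ x) ^ 2) :=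
      Iζ2.sub IBψ2
    have i2 : Integrable (fun x => 3 / 2 * ψ x ^ 2) := Iψ2.const_mul _
    have hs1 : ∫ x, (ζ x ^ 2 - (3 / Real.sqrt 2 * w x * ψ x - ζ x) ^ 2 - 3 / 2 * ψ x ^ 2)
        = (∫ x, (ζ x ^ 2 - (3 / Real.sqrt 2 * w x * ψ x - ζ x) ^ 2))
          - ∫ x, 3 / 2 * ψ x ^ 2 := integral_sub i1 i2
    have hs2 : ∫ x, (ζ x ^ 2 - (3 / Real.sqrt 2 * w x * ψ x - ζ x) ^ 2)
        = (∫ x, ζ x ^ 2) - ∫ x, (3 / Real.sqrt 2 * w x * ψ x - ζ x) ^ 2 :=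
      integral_sub Iζ2 IBψ2
    have hs3 : ∫ x, 3 / 2 * ψ x ^ 2 = 3 / 2 * ∫ x, ψ x ^ 2 := integral_const_mul _ _
    have hBnn : 0 ≤ ∫ x, (3 / Real.sqrt 2 * w x * ψ x - ζ x) ^ 2 :=
      integral_nonneg fun x => sq_nonneg _
    rw [hs1, hs2, hs3] at h0
    linarith
  -- identity 1 : ∫ (ζ'² - fp(w)ζ²) = ∫ (Aζ)²
  have IA2 : Integrable (fun x => (deriv ζ x + Real.sqrt 2 * w x * ζ x) ^ 2) := by
    have e : (fun x => (deriv ζ x + Real.sqrt 2 * w x * ζ x) ^ 2)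
        = fun x => deriv ζ x ^ 2 + 2 * Real.sqrt 2 * (w x * ζ x * deriv ζ x)
            + Real.sqrt 2 ^ 2 * (w x * ζ x) ^ 2 := by
      funext x; ring
    rw [e]
    exact (Iζ'2.add (Iwζζ'.const_mul _)).add (Iwζ2.const_mul _)
  have Ifpζ2 : Integrable (fun x => fp (w x) * ζ x ^ 2) := by
    refine (Iζ2.const_mul 4).mono'
      (((continuous_const.sub ((continuous_const.mul (w_cont.pow 2)))).mul
        (hcζ.pow 2)).aestronglyMeasurable) (ae_of_all _ fun x => ?_)
    rw [Real.norm_eq_abs, abs_mul]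
    have h1 : |fp (w x)| ≤ 4 := by
      rw [fp, abs_le]
      constructor <;> nlinarith [w_sq_lt_one x, sq_nonneg (w x)]
    have h2 : |ζ x ^ 2| = ζ x ^ 2 := abs_of_nonneg (sq_nonneg _)
    rw [h2]
    nlinarith [sq_nonneg (ζ x), abs_nonneg (fp (w x))]
  have ID1 : ∫ x, (deriv ζ x ^ 2 - fp (w x) * ζ x ^ 2)
      = ∫ x, (deriv ζ x + Real.sqrt 2 * w x * ζ x) ^ 2 := by
    have hg1d : ∀ x, HasDerivAt (fun y => Real.sqrt 2 * w y * ζ y ^ 2)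
        ((deriv ζ x + Real.sqrt 2 * w x * ζ x) ^ 2
          - (deriv ζ x ^ 2 - fp (w x) * ζ x ^ 2)) x := by
      intro x
      have harg : HasDerivAt (fun y => Real.sqrt 2 * w y)
          (Real.sqrt 2 * ((1 - w x ^ 2) / Real.sqrt 2)) x := (hw x).const_mul _
      have h := harg.mul (hsqd x)
      refine h.congr_deriv ?_
      rw [fp]
      exact (alg1 (Real.sqrt 2) (w x) (ζ x) (deriv ζ x) s2 s2ne).symm
    have ID1' : Integrable (fun x => (deriv ζ x + Real.sqrt 2 * w x * ζ x) ^ 2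
        - (deriv ζ x ^ 2 - fp (w x) * ζ x ^ 2)) := IA2.sub (Iζ'2.sub Ifpζ2)
    have hg1top : Tendsto (fun y => Real.sqrt 2 * w y * ζ y ^ 2) atTop (𝓝 0) := by
      rw [tendsto_zero_iff_abs_tendsto_zero]
      refine squeeze_zero (fun x => abs_nonneg _) (fun x => ?_) (by simpa using hζ2top.const_mul (2:ℝ))
      simp only [Function.comp_apply]
      rw [abs_mul, abs_mul, abs_of_nonneg (sq_nonneg (ζ x))]
      have h1 : |Real.sqrt 2| ≤ 2 := by rw [abs_of_nonneg s2pos.le]; nlinarith [s2le]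
      have h2 : |Real.sqrt 2| * |w x| ≤ 2 := by
        have := mul_le_mul h1 (w_abs_le x) (abs_nonneg _) (by norm_num)
        simpa using this
      exact mul_le_mul_of_nonneg_right h2 (sq_nonneg _)
    have hg1bot : Tendsto (fun y => Real.sqrt 2 * w y * ζ y ^ 2) atBot (𝓝 0) := by
      rw [tendsto_zero_iff_abs_tendsto_zero]
      refine squeeze_zero (fun x => abs_nonneg _) (fun x => ?_) (by simpa using hζ2bot.const_mul (2:ℝ))
      simp only [Function.comp_apply]
      rw [abs_mul, abs_mul, abs_of_nonneg (sq_nonneg (ζ x))]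
      have h1 : |Real.sqrt 2| ≤ 2 := by rw [abs_of_nonneg s2pos.le]; nlinarith [s2le]
      have h2 : |Real.sqrt 2| * |w x| ≤ 2 := by
        have := mul_le_mul h1 (w_abs_le x) (abs_nonneg _) (by norm_num)
        simpa using this
      exact mul_le_mul_of_nonneg_right h2 (sq_nonneg _)
    have h0 := integral_deriv_eq_zero _ _ hg1d ID1' hg1top hg1bot
    have iQ : Integrable (fun x => deriv ζ x ^ 2 - fp (w x) * ζ x ^ 2) := Iζ'2.sub Ifpζ2
    have hs : ∫ x, ((deriv ζ x + Real.sqrt 2 * w x * ζ x) ^ 2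
          - (deriv ζ x ^ 2 - fp (w x) * ζ x ^ 2))
        = (∫ x, (deriv ζ x + Real.sqrt 2 * w x * ζ x) ^ 2)
          - ∫ x, (deriv ζ x ^ 2 - fp (w x) * ζ x ^ 2) := integral_sub IA2 iQ
    rw [hs] at h0
    linarith
  -- conclusion
  have hQnn : 0 ≤ ∫ x, (deriv ζ x + Real.sqrt 2 * w x * ζ x) ^ 2 :=
    integral_nonneg fun x => sq_nonneg _
  have hCSfin := integral_CS (μ := volume) (fun x => deriv ζ x + Real.sqrt 2 * w x * ζ x) ψ
    (hmζ'.add (((continuous_const (y := Real.sqrt 2)).mul (w_cont.mul hcζ)).aestronglyMeasurable.congr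
      (ae_of_all _ fun x => by simp only [Pi.mul_apply]; ring))) hψc.aestronglyMeasurable IA2 Iψ2
  rw [ID3] at hCSfin
  rw [show (fun x : ℝ => deriv ζ x ^ 2 - fp (w x) * ζ x ^ 2)
      = fun x => (deriv ζ x ^ 2 - fp (w x) * ζ x ^ 2) from rfl, ID1]
  rcases eq_or_lt_of_le hK2nn with h0 | hpos
  · rw [← h0]
    simpa using hQnn
  · nlinarith [hCSfin, hψ2le, hpos, hQnn,
      mul_le_mul_of_nonneg_left hψ2le hQnn]
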